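/- In the polynomial ring R[x] over R, let f = λ·x² − λ·x − (μ² + μ) and g = λ·x² − μ·x − (μ + 1). Then there exists a unit u ∈ Rˣ such that the resultant of f and g (as degree-2 polynomials in x) equals u·(λ − 1)(μ + 1)(λ − μ³). -/

import Mathlib

noncomputable section

open Polynomial

/-- The Laurent polynomial ring `ℤ[λ^{±1}, μ^{±1}]`. -/
abbrev R : Type := AddMonoidAlgebra ℤ (ℤ × ℤ)

/-- The variable `λ`. -/
def lam : R := AddMonoidAlgebra.single (1, 0) 1

/-- The variable `μ`. -/
def mu : R := AddMonoidAlgebra.single (0, 1) 1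

/-- The resultant of two polynomials regarded as degree-2 polynomials in `x`,
i.e. the determinant of the 4×4 Sylvester matrix built from their
coefficients in degrees `2, 1, 0`. -/
def resultantDeg2 (f g : Polynomial R) : R :=
  Matrix.det
    !![f.coeff 2, f.coeff 1, f.coeff 0, 0;
       0, f.coeff 2, f.coeff 1, f.coeff 0;
       g.coeff 2, g.coeff 1, g.coeff 0, 0;
       0, g.coeff 2, g.coeff 1, g.coeff 0]

def lamInv : R := AddMonoidAlgebra.single (-1, 0) 1

lemma lam_mul_lamInv : lam * lamInv = 1 := by
  rw [lam, lamInv, AddMonoidAlgebra.single_mul_single]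
  norm_num
  rfl

lemma lamInv_mul_lam : lamInv * lam = 1 := by
  rw [lam, lamInv, AddMonoidAlgebra.single_mul_single]
  norm_num
  rfl

def lamUnit : Rˣ :=
  ⟨-lam, -lamInv, by rw [neg_mul_neg, lam_mul_lamInv],
    by rw [neg_mul_neg, lamInv_mul_lam]⟩

lemma det_fin_four' {S : Type*} [CommRing S]
    (a b c d e f g h i j k l m n o p : S) :
    Matrix.det !![a, b, c, d; e, f, g, h; i, j, k, l; m, n, o, p] =
      a * (f * (k * p - l * o) - g * (j * p - l * n) + h * (j * o - k * n))
      - b * (e * (k * p - l * o) - g * (i * p - l * m) + h * (i * o - k * m))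
      + c * (e * (j * p - l * n) - f * (i * p - l * m) + h * (i * n - j * m))
      - d * (e * (j * o - k * n) - f * (i * o - k * m) + g * (i * n - j * m)) := by
  rw [Matrix.det_succ_row_zero]
  simp [Fin.sum_univ_succ, Matrix.det_fin_three, Fin.succAbove]
  ring

/-- The augmentation polynomial of the left-handed trefoil: the resultant of
`λx² − λx − (μ² + μ)` and `λx² − μx − (μ + 1)` equals
`(λ − 1)(μ + 1)(λ − μ³)` up to a unit of `ℤ[λ^{±1}, μ^{±1}]`. -/
theorem trefoil_resultant :
    ∃ u : Rˣ,
      resultantDeg2 (C lam * X ^ 2 - C lam * X - C (mu ^ 2 + mu))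
          (C lam * X ^ 2 - C mu * X - C (mu + 1)) =
        (u : R) * ((lam - 1) * (mu + 1) * (lam - mu ^ 3)) := by
  refine ⟨lamUnit, ?_⟩
  show _ = -lam * _
  have key : ∀ a b c : R, (C a * X ^ 2 - C b * X - C c).coeff 2 = a ∧
      (C a * X ^ 2 - C b * X - C c).coeff 1 = -b ∧
      (C a * X ^ 2 - C b * X - C c).coeff 0 = -c := by
    intro a b c; refine ⟨?_, ?_, ?_⟩ <;> simp
  rw [resultantDeg2, (key lam lam (mu ^ 2 + mu)).1, (key lam lam (mu ^ 2 + mu)).2.1,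
    (key lam lam (mu ^ 2 + mu)).2.2, (key lam mu (mu + 1)).1, (key lam mu (mu + 1)).2.1,
    (key lam mu (mu + 1)).2.2, det_fin_four']
  ring
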